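/- Let a be an odd positive integer, b ∈ ℕ, and n = a·2^b. A vector v ∈ 𝔽_2^n works if and only if for every j ∈ {0,…,2^b−1}, the vector (v_j, v_{2^b+j}, v_{2·2^b+j}, …, v_{(a−1)·2^b+j}) ∈ 𝔽_2^a works; equivalently (since a is odd), if and only if ∑_{i=0}^{a−1} v_{i·2^b+j} = 0 in 𝔽_2 for every j ∈ {0,…,2^b−1}. -/

import Mathlib

/-- The cyclic shift operator on `𝔽₂ⁿ` (indexed by `ZMod n`): `(cshift x) i = x (i - 1)`. -/
def cshift {n : ℕ} (x : ZMod n → ZMod 2) : ZMod n → ZMod 2 := fun i => x (i - 1)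

/-- The standard dot product over `𝔽₂`. -/
def dot {n : ℕ} [NeZero n] (v x : ZMod n → ZMod 2) : ZMod 2 := ∑ i, v i * x i

/-- A vector `v ∈ 𝔽₂ⁿ` works if for every `x` some cyclic shift of `x` is orthogonal to `v`. -/
def Works {n : ℕ} [NeZero n] (v : ZMod n → ZMod 2) : Prop :=
  ∀ x : ZMod n → ZMod 2, ∃ k : ℕ, dot v (cshift^[k] x) = 0

open Finset
open Finset

lemma zmod2_ne_zero : ∀ {x : ZMod 2}, x ≠ 0 → x = 1 := by decide

lemma zmod2_add_eq_zero : ∀ {x y : ZMod 2}, x + y = 0 → x = y := by decide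

lemma odd_cast_zmod2 {a : ℕ} (ha : Odd a) : (a : ZMod 2) = 1 := by
  rw [← ZMod.natCast_mod, Nat.odd_iff.mp ha]; simp

lemma sum_zmod_eq_sum_range (n : ℕ) [NeZero n] (F : ZMod n → ZMod 2) :
    ∑ s, F s = ∑ k ∈ range n, F (k : ZMod n) := by
  refine Finset.sum_nbij' (fun s => s.val) (fun k => (k : ZMod n)) ?_ ?_ ?_ ?_ ?_
  · intro s _; exact mem_range.mpr (ZMod.val_lt s)
  · intro k _; exact mem_univ _
  · intro s _; simp [ZMod.natCast_val, ZMod.cast_id]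
  · intro k hk; show (k : ZMod n).val = k; rw [ZMod.val_natCast, Nat.mod_eq_of_lt (mem_range.mp hk)]
  · intro s _; simp [ZMod.natCast_val, ZMod.cast_id]

lemma sum_range_mul_split (a m : ℕ) (g : ℕ → ZMod 2) :
    ∑ k ∈ range (a * m), g k = ∑ i ∈ range a, ∑ j ∈ range m, g (i * m + j) := by
  induction a with
  | zero => simp
  | succ a ih =>
      rw [Nat.succ_mul, Finset.sum_range_add, ih, Finset.sum_range_succ]

lemma sum_zmod_double (n a m : ℕ) (hn : n = a * m) [NeZero n] (F : ZMod n → ZMod 2) :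
    ∑ s, F s = ∑ i ∈ range a, ∑ j ∈ range m, F ((i * m + j : ℕ) : ZMod n) := by
  subst hn
  rw [sum_zmod_eq_sum_range, sum_range_mul_split]

lemma cshift_iterate {n : ℕ} (x : ZMod n → ZMod 2) (k : ℕ) (i : ZMod n) :
    (cshift^[k] x) i = x (i - (k : ZMod n)) := by
  induction k generalizing i with
  | zero => simp
  | succ k ih =>
      rw [Function.iterate_succ_apply', cshift, ih]
      push_cast
      ring_nf

lemma dot_cshift {n : ℕ} [NeZero n] (v x : ZMod n → ZMod 2) (k : ℕ) :
    dot v (cshift^[k] x) = ∑ s, v s * x (s - (k : ZMod n)) := by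
  unfold dot; exact Finset.sum_congr rfl fun s _ => by rw [cshift_iterate]


lemma fold_helper (m : ℕ) (hm : 0 < m) (c : ℕ → ZMod 2) (u : ℕ) :
    (if u % (m + m) < m then c (u % (m + m)) else 0)
      + (if (m + u) % (m + m) < m then c ((m + u) % (m + m)) else 0) = c (u % m) := by
  have hr : u % (m + m) < m + m := Nat.mod_lt _ (by omega)
  have hmod : u % (m + m) % m = u % m := Nat.mod_mod_of_dvd u ⟨2, by ring⟩
  have h2 : (m + u) % (m + m) = (m + u % (m + m)) % (m + m) := by
    have e : m + u = m + u % (m + m) + (m + m) * (u / (m + m)) := by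
      rw [add_assoc, Nat.mod_add_div]
    rw [e, Nat.add_mul_mod_self_left]
  by_cases h : u % (m + m) < m
  · have h3 : (m + u % (m + m)) % (m + m) = m + u % (m + m) := Nat.mod_eq_of_lt (by omega)
    rw [if_pos h, h2, h3, if_neg (by omega)]
    have : u % (m + m) % m = u % (m + m) := Nat.mod_eq_of_lt h
    rw [← hmod, this, add_zero]
  · have h3 : (m + u % (m + m)) % (m + m) = u % (m + m) - m := by
      rw [Nat.mod_eq_sub_mod (by omega)]
      have : m + u % (m + m) - (m + m) = u % (m + m) - m := by omega
      rw [this, Nat.mod_eq_of_lt (by omega)]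
    rw [if_neg h, h2, h3, if_pos (by omega), zero_add]
    have : u % (m + m) % m = u % (m + m) - m := by
      rw [Nat.mod_eq_sub_mod (by omega), Nat.mod_eq_of_lt (by omega)]
    rw [← hmod, this]

lemma key (b : ℕ) (S : ℕ → ZMod 2) (h : ∃ j < 2 ^ b, S j ≠ 0) :
    ∃ c : ℕ → ZMod 2, ∀ k : ℕ, ∑ j ∈ range (2 ^ b), S j * c ((j + k) % 2 ^ b) = 1 := by
  induction b generalizing S with
  | zero =>
      obtain ⟨j, hj, hS⟩ := h
      interval_cases j
      exact ⟨fun _ => 1, fun k => by simpa using zmod2_ne_zero hS⟩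
  | succ b ih =>
      set m := 2 ^ b with hm
      have hm0 : 0 < m := Nat.pow_pos (by norm_num : 0 < 2)
      have h2m : 2 ^ (b + 1) = m + m := by rw [pow_succ]; omega
      have hdvd : m ∣ m + m := ⟨2, by ring⟩
      by_cases hA : ∃ j < m, S j + S (j + m) ≠ 0
      · -- Case 1
        obtain ⟨c, hc⟩ := ih (fun j => S (j % m) + S (j % m + m))
          (by
            obtain ⟨j, hj, hj2⟩ := hA
            refine ⟨j, hj, ?_⟩
            show S (j % m) + S (j % m + m) ≠ 0
            rwa [Nat.mod_eq_of_lt hj])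
        refine ⟨fun j => c (j % m), fun k => ?_⟩
        rw [h2m, Finset.sum_range_add]
        simp only []
        have e1 : ∀ j ∈ range m, S j * c ((j + k) % (m + m) % m)
            = S j * c ((j + k) % m) := fun j _ => by rw [Nat.mod_mod_of_dvd _ hdvd]
        have e2 : ∀ j ∈ range m, S (m + j) * c ((m + j + k) % (m + m) % m)
            = S (j + m) * c ((j + k) % m) := by
          intro j _
          rw [Nat.mod_mod_of_dvd _ hdvd, add_assoc, Nat.add_mod_left, add_comm m j]
        rw [Finset.sum_congr rfl e1, Finset.sum_congr rfl e2, ← Finset.sum_add_distrib]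
        have := hc k
        rw [← this]
        refine Finset.sum_congr rfl fun j hj => ?_
        rw [Nat.mod_eq_of_lt (mem_range.mp hj), add_mul]
      · -- Case 2
        push_neg at hA
        have hper : ∀ j < m, S (j + m) = S j := fun j hj => (zmod2_add_eq_zero (hA j hj)).symm
        obtain ⟨c, hc⟩ := ih S (by
          obtain ⟨j, hj, hj2⟩ := h
          rw [h2m] at hj
          by_cases hjm : j < m
          · exact ⟨j, hjm, hj2⟩
          · refine ⟨j - m, by omega, ?_⟩
            have : j - m + m = j := by omega
            rw [← this] at hj2
            rwa [hper _ (by omega)] at hj2)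
        refine ⟨fun j => if j % (m + m) < m then c (j % (m + m)) else 0, fun k => ?_⟩
        rw [h2m, Finset.sum_range_add]
        have hmm : ∀ u : ℕ, u % (m + m) % (m + m) = u % (m + m) := fun u => Nat.mod_mod_of_dvd u dvd_rfl
        simp only [hmm]
        have e2 : ∀ j ∈ range m,
            S (m + j) * (if (m + j + k) % (m + m) < m then c ((m + j + k) % (m + m)) else 0)
            = S j * (if (m + (j + k)) % (m + m) < m then c ((m + (j + k)) % (m + m)) else 0) := by
          intro j hj
          have h1 : m + j + k = m + (j + k) := by omega
          rw [h1, add_comm m j, hper _ (mem_range.mp hj)]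
        rw [Finset.sum_congr rfl e2, ← Finset.sum_add_distrib]
        have := hc k
        rw [← this]
        refine Finset.sum_congr rfl fun j _ => ?_
        rw [← mul_add, fold_helper m hm0 c (j + k)]


lemma works_of_S (n a m : ℕ) (hn : n = a * m) [NeZero n] (ha : Odd a)
    (v : ZMod n → ZMod 2)
    (hS : ∀ j < m, ∑ i ∈ range a, v ((i * m + j : ℕ) : ZMod n) = 0) : Works v := by
  intro x
  by_contra hx
  push_neg at hx
  have h1 : ∀ k, dot v (cshift^[k] x) = 1 := fun k => zmod2_ne_zero (hx k)
  set X : ZMod n → ZMod 2 := fun s => ∑ i ∈ range a, x (s - ((i * m : ℕ) : ZMod n)) with hX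
  have hXm : ∀ s, X (s - (m : ZMod n)) = X s := by
    intro s
    set g : ℕ → ZMod 2 := fun i => x (s - ((i * m : ℕ) : ZMod n)) with hg
    have hga : g a = g 0 := by
      simp only [hg, zero_mul, ← hn, ZMod.natCast_self, Nat.cast_zero, sub_zero]
    have step : ∀ i : ℕ, x (s - (m : ZMod n) - ((i * m : ℕ) : ZMod n)) = g (i + 1) := by
      intro i
      simp only [hg]
      congr 1
      push_cast
      ring
    have e1 : X (s - (m : ZMod n)) = ∑ i ∈ range a, g (i + 1) := by
      simp only [hX]
      exact Finset.sum_congr rfl fun i _ => step i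
    have e2 : ∑ i ∈ range a, g (i + 1) + g 0 = ∑ i ∈ range a, g i + g a := by
      rw [← Finset.sum_range_succ', Finset.sum_range_succ]
    rw [hga] at e2
    have : ∑ i ∈ range a, g (i + 1) = ∑ i ∈ range a, g i := by
      exact add_right_cancel e2
    rw [e1, this]
  have hX' : ∀ s, X (s + (m : ZMod n)) = X s := by
    intro s
    have := hXm (s + (m : ZMod n))
    rw [add_sub_cancel_right] at this
    exact this.symm
  have hXit : ∀ (i : ℕ) (s : ZMod n), X (s + ((i * m : ℕ) : ZMod n)) = X s := by
    intro i
    induction i with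
    | zero => simp
    | succ i ih =>
        intro s
        have e : ((( i + 1) * m : ℕ) : ZMod n) = ((i * m : ℕ) : ZMod n) + (m : ZMod n) := by
          push_cast; ring
        rw [e, ← add_assoc, hX', ih]
  have hT1 : ∑ i ∈ range a, dot v (cshift^[i * m] x) = 1 := by
    rw [Finset.sum_congr rfl fun i _ => h1 (i * m), Finset.sum_const, card_range,
      nsmul_eq_mul, mul_one, odd_cast_zmod2 ha]
  have hT0 : ∑ i ∈ range a, dot v (cshift^[i * m] x) = 0 := by
    have c1 : ∑ i ∈ range a, dot v (cshift^[i * m] x) = ∑ s, v s * X s := by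
      rw [Finset.sum_congr rfl fun i _ => dot_cshift v x (i * m), Finset.sum_comm]
      exact Finset.sum_congr rfl fun s _ => by rw [hX, ← Finset.mul_sum]
    rw [c1, sum_zmod_double n a m hn, Finset.sum_comm]
    have c2 : ∀ j ∈ range m, ∑ i ∈ range a, v ((i * m + j : ℕ) : ZMod n)
        * X ((i * m + j : ℕ) : ZMod n)
        = (∑ i ∈ range a, v ((i * m + j : ℕ) : ZMod n)) * X ((j : ℕ) : ZMod n) := by
      intro j _
      rw [Finset.sum_mul]
      refine Finset.sum_congr rfl fun i _ => ?_
      congr 1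
      have e : ((i * m + j : ℕ) : ZMod n) = ((j : ℕ) : ZMod n) + ((i * m : ℕ) : ZMod n) := by
        push_cast; ring
      rw [e, hXit]
    rw [Finset.sum_congr rfl c2]
    refine Finset.sum_eq_zero fun j hj => ?_
    rw [hS j (mem_range.mp hj), zero_mul]
  rw [hT1] at hT0
  exact one_ne_zero hT0

lemma not_works (a b : ℕ) [NeZero (a * 2 ^ b)]
    (v : ZMod (a * 2 ^ b) → ZMod 2)
    (hj : ∃ j < 2 ^ b, ∑ i ∈ range a, v ((i * 2 ^ b + j : ℕ) : ZMod (a * 2 ^ b)) ≠ 0) :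
    ¬ Works v := by
  have hn0 : 0 < a * 2 ^ b := Nat.pos_of_ne_zero (NeZero.ne _)
  have hmdvd : 2 ^ b ∣ a * 2 ^ b := ⟨a, by rw [mul_comm]⟩
  obtain ⟨c, hc⟩ := key b _ hj
  intro hW
  obtain ⟨k, hk⟩ := hW (fun s => c (s.val % 2 ^ b))
  have hKk : ∀ u : ℕ, ((u : ZMod (a * 2 ^ b)) - (k : ZMod (a * 2 ^ b)))
      = ((u + (a * 2 ^ b - k % (a * 2 ^ b)) : ℕ) : ZMod (a * 2 ^ b)) := by
    intro u
    have h1 : (((a * 2 ^ b - k % (a * 2 ^ b)) : ℕ) : ZMod (a * 2 ^ b))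
        + ((k : ℕ) : ZMod (a * 2 ^ b)) = 0 := by
      rw [← ZMod.natCast_mod k (a * 2 ^ b), ← Nat.cast_add,
        Nat.sub_add_cancel (le_of_lt (Nat.mod_lt k hn0)), ZMod.natCast_self]
    push_cast
    linear_combination -h1
  have hdot : dot v (cshift^[k] (fun s => c (s.val % 2 ^ b))) = 1 := by
    rw [dot_cshift, sum_zmod_double (a * 2 ^ b) a (2 ^ b) rfl]
    have e1 : ∀ i ∈ range a, ∀ j ∈ range (2 ^ b),
        v ((i * 2 ^ b + j : ℕ) : ZMod (a * 2 ^ b))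
          * c ((((i * 2 ^ b + j : ℕ) : ZMod (a * 2 ^ b)) - (k : ZMod (a * 2 ^ b))).val % 2 ^ b)
        = v ((i * 2 ^ b + j : ℕ) : ZMod (a * 2 ^ b))
          * c ((j + (a * 2 ^ b - k % (a * 2 ^ b))) % 2 ^ b) := by
      intro i _ j _
      congr 1
      rw [hKk, ZMod.val_natCast, Nat.mod_mod_of_dvd _ hmdvd]
      congr 1
      rw [add_assoc, add_comm, Nat.add_mul_mod_self_right]
    calc ∑ i ∈ range a, ∑ j ∈ range (2 ^ b), v ((i * 2 ^ b + j : ℕ) : ZMod (a * 2 ^ b))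
          * (fun s : ZMod (a * 2 ^ b) => c (s.val % 2 ^ b))
            (((i * 2 ^ b + j : ℕ) : ZMod (a * 2 ^ b)) - (k : ZMod (a * 2 ^ b)))
        = ∑ i ∈ range a, ∑ j ∈ range (2 ^ b),
            v ((i * 2 ^ b + j : ℕ) : ZMod (a * 2 ^ b))
              * c ((j + (a * 2 ^ b - k % (a * 2 ^ b))) % 2 ^ b) := by
          refine Finset.sum_congr rfl fun i hi => Finset.sum_congr rfl fun j hjm => e1 i hi j hjm
      _ = ∑ j ∈ range (2 ^ b), (∑ i ∈ range a, v ((i * 2 ^ b + j : ℕ) : ZMod (a * 2 ^ b)))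
            * c ((j + (a * 2 ^ b - k % (a * 2 ^ b))) % 2 ^ b) := by
          rw [Finset.sum_comm]
          exact Finset.sum_congr rfl fun j _ => by rw [Finset.sum_mul]
      _ = 1 := hc _
  rw [hk] at hdot
  exact one_ne_zero hdot.symm

lemma works_iff_sum_odd (n : ℕ) [NeZero n] (hodd : Odd n) (w : ZMod n → ZMod 2) :
    Works w ↔ ∑ i, w i = 0 := by
  constructor
  · intro hW
    obtain ⟨k, hk⟩ := hW (fun _ => 1)
    rw [dot_cshift] at hk
    simpa using hk
  · intro hsum
    refine works_of_S n n 1 (by ring) hodd w ?_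
    intro j hj
    interval_cases j
    rw [← hsum, sum_zmod_eq_sum_range]
    exact Finset.sum_congr rfl fun i _ => by rw [mul_one, add_zero]


/-- Let `a` be odd, `b ∈ ℕ` and `n = a·2ᵇ`. A vector `v ∈ 𝔽₂ⁿ` works iff for every
`j ∈ {0,…,2ᵇ−1}` the vector `(v_j, v_{2ᵇ+j}, …, v_{(a−1)·2ᵇ+j}) ∈ 𝔽₂ᵃ` works;
equivalently (since `a` is odd), iff `∑_{i=0}^{a−1} v_{i·2ᵇ+j} = 0` for every such `j`. -/
theorem works_iff_components (a b : ℕ) [NeZero a] [NeZero (a * 2 ^ b)] (ha : Odd a)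
    (v : ZMod (a * 2 ^ b) → ZMod 2) :
    (Works v ↔ ∀ j < 2 ^ b,
        Works (fun i : ZMod a => v (((i.val * 2 ^ b + j : ℕ) : ZMod (a * 2 ^ b))))) ∧
    (Works v ↔ ∀ j < 2 ^ b,
        ∑ i ∈ Finset.range a, v (((i * 2 ^ b + j : ℕ) : ZMod (a * 2 ^ b))) = 0) := by

  have H2 : Works v ↔ ∀ j < 2 ^ b,
      ∑ i ∈ Finset.range a, v (((i * 2 ^ b + j : ℕ) : ZMod (a * 2 ^ b))) = 0 := by
    constructor
    · intro hW j hj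
      by_contra hS0
      exact not_works a b v ⟨j, hj, hS0⟩ hW
    · intro hS
      exact works_of_S (a * 2 ^ b) a (2 ^ b) rfl ha v hS
  have hcomp : ∀ j : ℕ, (∑ i : ZMod a, v (((i.val * 2 ^ b + j : ℕ) : ZMod (a * 2 ^ b))))
      = ∑ i ∈ Finset.range a, v (((i * 2 ^ b + j : ℕ) : ZMod (a * 2 ^ b))) := by
    intro j
    rw [sum_zmod_eq_sum_range a (fun i => v (((i.val * 2 ^ b + j : ℕ) : ZMod (a * 2 ^ b))))]
    refine Finset.sum_congr rfl fun i hi => ?_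
    rw [ZMod.val_natCast, Nat.mod_eq_of_lt (mem_range.mp hi)]
  refine ⟨?_, H2⟩
  rw [H2]
  constructor
  · intro hS j hj
    rw [works_iff_sum_odd a ha, hcomp]
    exact hS j hj
  · intro hWc j hj
    rw [← hcomp]
    rw [← works_iff_sum_odd a ha]
    exact hWc j hj
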